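/- Let d ≥ 2 and let ℓ₁, …, ℓ_d : ℂ² → ℂ be nonzero ℂ-linear functionals that are pairwise linearly independent (so that their kernels are d distinct lines through the origin in ℂ²). Let W = {p ∈ ℂ² : ℓᵢ(p) ≠ 0 for all i = 1, …, d}. Then there exists a finite set S ⊆ ℂ of cardinality d−1 such that W is homeomorphic to ℂˣ × (ℂ ∖ S). -/
import Mathlib


/-- the complement `W` of a central arrangement of `d` distinct lines through
the origin of `ℂ²` is homeomorphic to `ℂˣ × (ℂ ∖ S)` for a finite set `S` of `d − 1` points. -/
theorem stmt6 (d : ℕ) (hd : 2 ≤ d) (ℓ : Fin d → ((Fin 2 → ℂ) →ₗ[ℂ] ℂ))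
    (hne : ∀ i, ℓ i ≠ 0)
    (hind : ∀ i j, i ≠ j → LinearIndependent ℂ ![ℓ i, ℓ j]) :
    ∃ S : Finset ℂ, S.card = d - 1 ∧
      Nonempty
        ({p : Fin 2 → ℂ // ∀ i, ℓ i p ≠ 0} ≃ₜ
          ({z : ℂ // z ≠ 0} × {z : ℂ // z ∉ S})) := by
  classical
  set α : Fin d → ℂ := fun i => ℓ i (Pi.single 0 1) with hα
  set β : Fin d → ℂ := fun i => ℓ i (Pi.single 1 1) with hβ
  have hrep : ∀ i (p : Fin 2 → ℂ), ℓ i p = p 0 * α i + p 1 * β i := by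
    intro i p
    have hp : p = p 0 • (Pi.single 0 1 : Fin 2 → ℂ) + p 1 • (Pi.single 1 1 : Fin 2 → ℂ) := by
      funext j; fin_cases j <;> simp
    conv_lhs => rw [hp]
    simp [hα, hβ, mul_comm]
  have hdet : ∀ i j, i ≠ j → α i * β j - α j * β i ≠ 0 := by
    intro i j hij h
    have key : ∀ s t : ℂ, s * α i = t * α j → s * β i = t * β j →
        s • ℓ i + (-t) • ℓ j = 0 := by
      intro s t h1 h2
      apply LinearMap.ext; intro p
      simp only [LinearMap.add_apply, LinearMap.smul_apply, smul_eq_mul, hrep,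
        LinearMap.zero_apply]
      linear_combination p 0 * h1 + p 1 * h2
    have hβ0 := (LinearIndependent.pair_iff.1 (hind i j hij)) (β j) (-(β i))
      (key (β j) (β i) (by linear_combination h) (by ring))
    have hα0 := (LinearIndependent.pair_iff.1 (hind i j hij)) (α j) (-(α i))
      (key (α j) (α i) (by ring) (by linear_combination -h))
    apply hne i
    apply LinearMap.ext; intro p
    have hb : β i = 0 := by have := hβ0.2; simpa using this
    have ha : α i = 0 := by have := hα0.2; simpa using this
    rw [hrep]
    simp [ha, hb]
  have h01 : (⟨0, by omega⟩ : Fin d) ≠ ⟨1, by omega⟩ := by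
    intro h; exact absurd (congrArg Fin.val h) (by norm_num)
  set i0 : Fin d := ⟨0, by omega⟩ with hi0
  set i1 : Fin d := ⟨1, by omega⟩ with hi1
  set D : ℂ := α i0 * β i1 - α i1 * β i0 with hD
  have hDne : D ≠ 0 := hdet i0 i1 h01
  set A : Fin d → ℂ := fun i => α i * β i1 - α i1 * β i with hA
  set B : Fin d → ℂ := fun i => α i0 * β i - α i * β i0 with hB
  have hkey : ∀ i (p : Fin 2 → ℂ), D * ℓ i p = A i * ℓ i0 p + B i * ℓ i1 p := by
    intro i p
    rw [hrep, hrep, hrep]; simp only [hA, hB, hD]; ring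
  have hBne : ∀ i, i ≠ i0 → B i ≠ 0 := fun i hi => hdet i0 i (Ne.symm hi)
  set c : Fin d → ℂ := fun i => -(A i) / B i with hc
  set S : Finset ℂ := (Finset.univ.erase i0).image c with hS
  -- characterization of membership in S
  have hmem : ∀ t : ℂ, t ∉ S ↔ ∀ i, i ≠ i0 → A i + t * B i ≠ 0 := by
    intro t
    simp only [hS, Finset.mem_image, not_exists, not_and, Finset.mem_erase,
      Finset.mem_univ, and_true]
    constructor
    · intro h i hi habs
      apply h i hi
      have hBi := hBne i hi
      simp only [hc]
      field_simp
      linear_combination -habs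
    · intro h i hi hci
      apply h i hi
      have hBi := hBne i hi
      simp only [hc] at hci
      rw [div_eq_iff hBi] at hci
      linear_combination -hci
  refine ⟨S, ?_, ?_⟩
  · rw [hS, Finset.card_image_of_injOn, Finset.card_erase_of_mem (Finset.mem_univ _),
      Finset.card_univ, Fintype.card_fin]
    intro i hi j hj hcij
    simp only [Finset.mem_coe, Finset.mem_erase, Finset.mem_univ, and_true] at hi hj
    by_contra hij
    have hBi := hBne i hi
    have hBj := hBne j hj
    simp only [hc] at hcij
    rw [div_eq_div_iff hBi hBj] at hcij
    have hd0 : D * (α i * β j - α j * β i) = 0 := by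
      simp only [hA, hB, hD]
      simp only [hA, hB] at hcij
      linear_combination -hcij
    exact hdet i j hij ((mul_eq_zero.1 hd0).resolve_left hDne)
  · -- the homeomorphism
    have hAB0 : ∀ (t : ℂ), A i0 + t * B i0 = D := by
      intro t; simp only [hA, hB, hD]; ring
    refine ⟨Homeomorph.mk (Equiv.mk ?_ ?_ ?_ ?_) ?_ ?_⟩
    · -- toFun
      refine fun p => ⟨⟨ℓ i0 p.1, p.2 i0⟩, ⟨ℓ i1 p.1 / ℓ i0 p.1, ?_⟩⟩
      rw [hmem]
      intro i hi habs
      apply p.2 i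
      have hu : ℓ i0 p.1 ≠ 0 := p.2 i0
      have : D * ℓ i p.1 = 0 := by
        rw [hkey]
        field_simp at habs
        linear_combination habs
      have := (mul_eq_zero.1 this).resolve_left hDne
      exact this
    · -- invFun
      refine fun w => ⟨![(w.1.1 * β i1 - w.2.1 * w.1.1 * β i0) / D,
        (w.2.1 * w.1.1 * α i0 - w.1.1 * α i1) / D], ?_⟩
      intro i
      have hu : w.1.1 ≠ 0 := w.1.2
      have ht := w.2.2
      rw [hmem] at ht
      have hAtB : A i + w.2.1 * B i ≠ 0 := by
        rcases eq_or_ne i i0 with rfl | hi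
        · rw [hAB0]; exact hDne
        · exact ht i hi
      rw [hrep]
      have hval : (![(w.1.1 * β i1 - w.2.1 * w.1.1 * β i0) / D,
          (w.2.1 * w.1.1 * α i0 - w.1.1 * α i1) / D] : Fin 2 → ℂ) 0 * α i
          + (![(w.1.1 * β i1 - w.2.1 * w.1.1 * β i0) / D,
          (w.2.1 * w.1.1 * α i0 - w.1.1 * α i1) / D] : Fin 2 → ℂ) 1 * β i
          = w.1.1 * (A i + w.2.1 * B i) / D := by
        simp only [Matrix.cons_val_zero, Matrix.cons_val_one, Matrix.head_cons, hA, hB, hD]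
        field_simp
        ring
      rw [hval]
      exact div_ne_zero (mul_ne_zero hu hAtB) hDne
    · -- left_inv
      intro p
      have hu : ℓ i0 p.1 ≠ 0 := p.2 i0
      apply Subtype.ext
      funext j
      fin_cases j
      · show (ℓ i0 p.1 * β i1 - ℓ i1 p.1 / ℓ i0 p.1 * ℓ i0 p.1 * β i0) / D = p.1 0
        rw [hrep, hrep]
        rw [hrep] at hu
        field_simp [hD]
        ring
      · show (ℓ i1 p.1 / ℓ i0 p.1 * ℓ i0 p.1 * α i0 - ℓ i0 p.1 * α i1) / D = p.1 1
        rw [hrep, hrep]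
        rw [hrep] at hu
        field_simp [hD]
        ring
    · -- right_inv
      intro w
      have hu : w.1.1 ≠ 0 := w.1.2
      have e0 : ℓ i0 ![(w.1.1 * β i1 - w.2.1 * w.1.1 * β i0) / D,
          (w.2.1 * w.1.1 * α i0 - w.1.1 * α i1) / D] = w.1.1 := by
        rw [hrep]
        simp only [Matrix.cons_val_zero, Matrix.cons_val_one, Matrix.head_cons]
        field_simp [hD]
        ring
      have e1 : ℓ i1 ![(w.1.1 * β i1 - w.2.1 * w.1.1 * β i0) / D,
          (w.2.1 * w.1.1 * α i0 - w.1.1 * α i1) / D] = w.2.1 * w.1.1 := by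
        rw [hrep]
        simp only [Matrix.cons_val_zero, Matrix.cons_val_one, Matrix.head_cons]
        field_simp [hD]
        ring
      refine Prod.ext (Subtype.ext ?_) (Subtype.ext ?_)
      · exact e0
      · show ℓ i1 _ / ℓ i0 _ = w.2.1
        rw [e0, e1]
        field_simp
    · -- continuity of toFun
      have hc0 : Continuous fun p : {p : Fin 2 → ℂ // ∀ i, ℓ i p ≠ 0} => ℓ i0 p.1 :=
        (ℓ i0).continuous_of_finiteDimensional.comp continuous_subtype_val
      have hc1 : Continuous fun p : {p : Fin 2 → ℂ // ∀ i, ℓ i p ≠ 0} => ℓ i1 p.1 :=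
        (ℓ i1).continuous_of_finiteDimensional.comp continuous_subtype_val
      exact (Continuous.subtype_mk hc0 _).prodMk
        (Continuous.subtype_mk (hc1.div hc0 fun p => p.2 i0) _)
    · -- continuity of invFun
      apply Continuous.subtype_mk
      apply continuous_pi
      intro j
      have hw1 : Continuous fun w : {z : ℂ // z ≠ 0} × {z : ℂ // z ∉ S} => w.1.1 :=
        continuous_subtype_val.comp continuous_fst
      have hw2 : Continuous fun w : {z : ℂ // z ≠ 0} × {z : ℂ // z ∉ S} => w.2.1 :=
        continuous_subtype_val.comp continuous_snd
      fin_cases j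
      · show Continuous fun w : {z : ℂ // z ≠ 0} × {z : ℂ // z ∉ S} =>
          (w.1.1 * β i1 - w.2.1 * w.1.1 * β i0) / D
        exact ((hw1.mul continuous_const).sub ((hw2.mul hw1).mul continuous_const)).div_const D
      · show Continuous fun w : {z : ℂ // z ≠ 0} × {z : ℂ // z ∉ S} =>
          (w.2.1 * w.1.1 * α i0 - w.1.1 * α i1) / D
        exact (((hw2.mul hw1).mul continuous_const).sub (hw1.mul continuous_const)).div_const D
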